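/- arXiv:1607.03942 — 2 statements merged into one kernel-verified Lean document; each statement's English description precedes it below -/
import Mathlib

section
/- Let A = M_n(F) carry the elementary grading induced by an n-tuple (g_1,…,g_n) of pairwise distinct elements of a group G, and let H ≤ S_n be the group of permutations whose associated automorphisms Λ_σ are graded. Then the grading of A is a crossed product grading by the support of the grading if and only if |H| = n; moreover, in this case the group H is isomorphic to the support (which is then a subgroup of G of order n). -/
section Elementary

variable (F : Type*) [Field F] {G : Type*} [Group G] {n : ℕ}

/-- The homogeneous component of degree `x` of the elementary grading of `Mₙ(F)`
induced by the tuple `v`: it is spanned by the matrix units `E i j` with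
`(v i)⁻¹ * v j = x`. -/
def elemComp (v : Fin n → G) (x : G) : Submodule F (Matrix (Fin n) (Fin n) F) where
  carrier := {M | ∀ i j, (v i)⁻¹ * v j ≠ x → M i j = 0}
  add_mem' := by
    intro M N hM hN i j h
    simp [Matrix.add_apply, hM i j h, hN i j h]
  zero_mem' := by intro i j _; simp
  smul_mem' := by
    intro c M hM i j h
    simp [Matrix.smul_apply, hM i j h]

/-- The subgroup of permutations `σ` of `{1,…,n}` for which the automorphism `Λ_σ`
(which sends `E i j` to `E (σ i) (σ j)`) is a graded automorphism. -/
def GradedPerms (v : Fin n → G) : Subgroup (Equiv.Perm (Fin n)) where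
  carrier := {σ | ∀ i j, (v (σ i))⁻¹ * v (σ j) = (v i)⁻¹ * v j}
  one_mem' := by intro i j; simp
  mul_mem' := by
    intro σ τ hσ hτ i j
    simpa [Equiv.Perm.mul_apply] using (hσ (τ i) (τ j)).trans (hτ i j)
  inv_mem' := by
    intro σ hσ i j
    simpa using (hσ (σ⁻¹ i) (σ⁻¹ j)).symm

/-- The automorphism `Λ_σ` of the matrix algebra, determined by
`Λ_σ (E i j) = E (σ i) (σ j)`. -/
def permConj (σ : Equiv.Perm (Fin n)) (M : Matrix (Fin n) (Fin n) F) :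
    Matrix (Fin n) (Fin n) F :=
  M.submatrix ⇑σ.symm ⇑σ.symm

end Elementary

section Support

variable (F : Type*) [Field F] {G : Type*} [Group G] {n : ℕ}

/-- The support of the elementary grading induced by `v`. -/
def gradingSupport (v : Fin n → G) : Set G := {g : G | elemComp F v g ≠ ⊥}

end Support

section AuxProofs

variable {G : Type*} [Group G] {n : ℕ}

lemma mem_gradingSupport (F : Type*) [Field F] (v : Fin n → G) (g : G) :
    g ∈ gradingSupport F v ↔ ∃ i j, (v i)⁻¹ * v j = g := by
  constructor
  · intro hg
    by_contra hne
    push_neg at hne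
    apply hg
    rw [Submodule.eq_bot_iff]
    intro M hM
    ext i j
    exact hM i j (hne i j)
  · rintro ⟨i, j, hij⟩
    intro hbot
    have h1 : Matrix.single i j (1 : F) ∈ elemComp F v g := by
      intro i' j' h
      apply Matrix.single_apply_of_ne
      rintro ⟨rfl, rfl⟩
      exact h hij
    rw [hbot, Submodule.mem_bot F] at h1
    have := congrFun (congrFun h1 i) j
    rw [Matrix.single_apply_same] at this
    simp at this

lemma gradedPerms_apply {v : Fin n → G} {σ : Equiv.Perm (Fin n)}
    (hσ : σ ∈ GradedPerms v) (i j : Fin n) :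
    v (σ j) = v (σ i) * (v i)⁻¹ * v j := by
  have h := hσ i j
  rw [mul_assoc, ← h, mul_inv_cancel_left]

lemma gradedPerms_eq_one {v : Fin n → G} (hv : Function.Injective v)
    {σ : Equiv.Perm (Fin n)} (hσ : σ ∈ GradedPerms v) {i0 : Fin n}
    (h : σ i0 = i0) : σ = 1 := by
  apply Equiv.ext
  intro j
  have := gradedPerms_apply hσ i0 j
  rw [h, mul_inv_cancel, one_mul] at this
  rw [Equiv.Perm.one_apply]
  exact hv this

/-- The canonical embedding of `GradedPerms v` into `G`, based at `i0`. -/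
def chiHom (v : Fin n → G) (i0 : Fin n) : ↥(GradedPerms v) →* G where
  toFun σ := (v i0)⁻¹ * v (σ.1 i0)
  map_one' := by simp
  map_mul' := by
    rintro ⟨σ, hσ⟩ ⟨τ, hτ⟩
    show (v i0)⁻¹ * v ((σ * τ) i0) = ((v i0)⁻¹ * v (σ i0)) * ((v i0)⁻¹ * v (τ i0))
    rw [Equiv.Perm.mul_apply, gradedPerms_apply hσ i0 (τ i0)]
    group

lemma chiHom_injective {v : Fin n → G} (hv : Function.Injective v) (i0 : Fin n) :
    Function.Injective (chiHom v i0) := by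
  rw [injective_iff_map_eq_one]
  rintro ⟨σ, hσ⟩ h
  have h1 : v (σ i0) = v i0 := by
    have : (v i0)⁻¹ * v (σ i0) = 1 := h
    rwa [inv_mul_eq_one, eq_comm] at this
  exact Subtype.ext (gradedPerms_eq_one hv hσ (hv h1))

lemma apply_basepoint_injective {v : Fin n → G} (hv : Function.Injective v) (i0 : Fin n) :
    Function.Injective (fun σ : ↥(GradedPerms v) => σ.1 i0) := by
  intro σ τ h
  have h' : σ.1 i0 = τ.1 i0 := h
  have hmem : (τ⁻¹ * σ : ↥(GradedPerms v)).1 ∈ GradedPerms v := (τ⁻¹ * σ).2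
  have hfix : (τ⁻¹ * σ : ↥(GradedPerms v)).1 i0 = i0 := by
    show (τ.1⁻¹ * σ.1) i0 = i0
    rw [Equiv.Perm.mul_apply, h']
    exact τ.1.symm_apply_apply i0
  have : (τ⁻¹ * σ : ↥(GradedPerms v)) = 1 := Subtype.ext (gradedPerms_eq_one hv hmem hfix)
  rwa [inv_mul_eq_one, eq_comm] at this

end AuxProofs

/-- Let `A = Mₙ(F)` carry the elementary grading induced by an
`n`-tuple of pairwise distinct elements of a group `G` and let `H` be the group of
permutations with graded associated automorphism.  The grading is a crossed product
grading by the support (the support is a subgroup of order `n`) if and only if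
`|H| = n`; moreover, in this case `H` is isomorphic to the support. -/
theorem crossed_product_iff_card_gradedPerms
    (F : Type*) [Field F] {G : Type*} [Group G] {n : ℕ} (v : Fin n → G)
    (hv : Function.Injective v) :
    ((∃ S : Subgroup G, (S : Set G) = gradingSupport F v ∧ Nat.card ↥S = n) ↔
        Nat.card ↥(GradedPerms v) = n)
      ∧ (Nat.card ↥(GradedPerms v) = n →
          ∃ S : Subgroup G, (S : Set G) = gradingSupport F v ∧ Nat.card ↥S = n ∧
            Nonempty (↥(GradedPerms v) ≃* ↥S)) := by
  rcases Nat.eq_zero_or_pos n with h0 | hpos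
  · -- degenerate case `n = 0`
    subst h0
    have hHpos : 0 < Nat.card ↥(GradedPerms v) := by
      have : Nonempty ↥(GradedPerms v) := ⟨1⟩
      exact Nat.card_pos
    have hL : ¬ ∃ S : Subgroup G, (S : Set G) = gradingSupport F v ∧ Nat.card ↥S = 0 := by
      rintro ⟨S, hS, -⟩
      have h1 : (1 : G) ∈ gradingSupport F v := hS ▸ S.one_mem
      rw [mem_gradingSupport] at h1
      obtain ⟨i, -, -⟩ := h1
      exact i.elim0
    exact ⟨⟨fun h => absurd h hL, fun h => absurd h.symm hHpos.ne⟩,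
      fun h => absurd h.symm hHpos.ne⟩
  · set i0 : Fin n := ⟨0, hpos⟩ with hi0
    -- the backward direction, with the isomorphism
    have key : Nat.card ↥(GradedPerms v) = n →
        ∃ S : Subgroup G, (S : Set G) = gradingSupport F v ∧ Nat.card ↥S = n ∧
          Nonempty (↥(GradedPerms v) ≃* ↥S) := by
      intro hcard
      refine ⟨(chiHom v i0).range, ?_, ?_, ⟨MonoidHom.ofInjective (chiHom_injective hv i0)⟩⟩
      · ext g
        rw [SetLike.mem_coe, MonoidHom.mem_range, mem_gradingSupport]
        constructor
        · rintro ⟨σ, rfl⟩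
          exact ⟨i0, σ.1 i0, rfl⟩
        · rintro ⟨i, j, rfl⟩
          have hbij : Function.Bijective (fun σ : ↥(GradedPerms v) => σ.1 i0) := by
            rw [Nat.bijective_iff_injective_and_card]
            exact ⟨apply_basepoint_injective hv i0, by simp [hcard]⟩
          obtain ⟨σi, hσi⟩ := hbij.2 i
          obtain ⟨σj, hσj⟩ := hbij.2 j
          refine ⟨σi⁻¹ * σj, ?_⟩
          rw [map_mul, map_inv]
          show ((v i0)⁻¹ * v (σi.1 i0))⁻¹ * ((v i0)⁻¹ * v (σj.1 i0)) = _
          have hσi' : σi.1 i0 = i := hσi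
          have hσj' : σj.1 i0 = j := hσj
          rw [hσi', hσj']
          group
      · rw [Nat.card_congr (MonoidHom.ofInjective (chiHom_injective hv i0)).toEquiv.symm, hcard]
    refine ⟨⟨?_, fun h => (key h).imp fun S hS => ⟨hS.1, hS.2.1⟩⟩, key⟩
    -- forward direction
    rintro ⟨S, hS, hcardS⟩
    have hmemS : ∀ j : Fin n, (v i0)⁻¹ * v j ∈ S := by
      intro j
      have : (v i0)⁻¹ * v j ∈ gradingSupport F v := (mem_gradingSupport F v _).2 ⟨i0, j, rfl⟩
      rw [← hS] at this
      exact this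
    -- the map `e : Fin n → S` is bijective
    have hSfin : Finite ↥S := Nat.finite_of_card_ne_zero (by omega)
    set e : Fin n → ↥S := fun j => ⟨(v i0)⁻¹ * v j, hmemS j⟩ with he
    have hebij : Function.Bijective e := by
      rw [Nat.bijective_iff_injective_and_card]
      refine ⟨fun a b hab => ?_, by simp [hcardS]⟩
      apply hv
      have : (v i0)⁻¹ * v a = (v i0)⁻¹ * v b := congrArg Subtype.val hab
      exact mul_left_cancel this
    -- chiHom viewed as a map into S is surjective
    have hchiS : ∀ σ : ↥(GradedPerms v), chiHom v i0 σ ∈ S := by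
      intro σ
      exact hmemS (σ.1 i0)
    have hsurj : ∀ s : ↥S, ∃ σ : ↥(GradedPerms v), chiHom v i0 σ = s.1 := by
      intro s
      set eE : Fin n ≃ ↥S := Equiv.ofBijective e hebij with heE
      -- left multiplication by s on the elements `w j = (v i0)⁻¹ * v j`
      set f : Fin n → Fin n := fun i => eE.symm ⟨s.1 * ((v i0)⁻¹ * v i), mul_mem s.2 (hmemS i)⟩
        with hf
      have hfkey : ∀ i, (v i0)⁻¹ * v (f i) = s.1 * ((v i0)⁻¹ * v i) := by
        intro i
        have := eE.apply_symm_apply ⟨s.1 * ((v i0)⁻¹ * v i), mul_mem s.2 (hmemS i)⟩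
        have := congrArg Subtype.val this
        exact this
      have hfinj : Function.Injective f := by
        intro a b hab
        have h1 := hfkey a
        rw [hab, hfkey b] at h1
        exact (hv (mul_left_cancel (mul_left_cancel h1))).symm
      obtain ⟨finv, hfinv⟩ := Function.bijective_iff_has_inverse.mp
        (Finite.injective_iff_bijective.mp hfinj)
      set σ : Equiv.Perm (Fin n) := ⟨f, finv, hfinv.1, hfinv.2⟩ with hσdef
      have hσmem : σ ∈ GradedPerms v := by
        intro i j
        show (v (f i))⁻¹ * v (f j) = (v i)⁻¹ * v j
        have hi := hfkey i
        have hj := hfkey j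
        have : ((v i0)⁻¹ * v (f i))⁻¹ * ((v i0)⁻¹ * v (f j))
            = (s.1 * ((v i0)⁻¹ * v i))⁻¹ * (s.1 * ((v i0)⁻¹ * v j)) := by rw [hi, hj]
        calc (v (f i))⁻¹ * v (f j)
            = ((v i0)⁻¹ * v (f i))⁻¹ * ((v i0)⁻¹ * v (f j)) := by group
          _ = (s.1 * ((v i0)⁻¹ * v i))⁻¹ * (s.1 * ((v i0)⁻¹ * v j)) := this
          _ = (v i)⁻¹ * v j := by group
      refine ⟨⟨σ, hσmem⟩, ?_⟩
      show (v i0)⁻¹ * v (σ i0) = s.1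
      have : (v i0)⁻¹ * v (f i0) = s.1 * ((v i0)⁻¹ * v i0) := hfkey i0
      rw [inv_mul_cancel, mul_one] at this
      exact this
    -- conclude
    have hle : Nat.card ↥(GradedPerms v) ≤ n := by
      have := Nat.card_le_card_of_injective _ (apply_basepoint_injective hv i0)
      simpa using this
    have hge : n ≤ Nat.card ↥(GradedPerms v) := by
      have hsur : Function.Surjective
          (fun σ : ↥(GradedPerms v) => (⟨chiHom v i0 σ, hchiS σ⟩ : ↥S)) := by
        intro s
        obtain ⟨σ, hσ⟩ := hsurj s
        exact ⟨σ, Subtype.ext hσ⟩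
      have := Nat.card_le_card_of_surjective _ hsur
      rwa [hcardS] at this
    omega
end

section
/- Let F be an infinite field and let R be an F-algebra with a minimal regular grading by an abelian group H (neutral element ε) that satisfies condition (R1). Let R′ = F⟨X_H⟩/Id_H(R), the quotient of the free H-graded algebra by the ideal of H-graded identities of R, with its canonical H-grading. Then Z(R′) = R′_ε. -/
section GradedDefs

variable {F : Type*} [Field F] {G : Type*} [Group G] {A : Type*} [Ring A] [Algebra F A]

/-- An internal algebra grading of `A` by the group `G`: the components are independent,
span `A`, and multiply according to the group operation. -/
structure IsAlgGrading [DecidableEq G] (𝒜 : G → Submodule F A) : Prop where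
  internal : DirectSum.IsInternal 𝒜
  mul_mem : ∀ {g h : G} {x y : A}, x ∈ 𝒜 g → y ∈ 𝒜 h → x * y ∈ 𝒜 (g * h)

/-- An admissible (graded) substitution: the variable `x_{i,g}` is replaced by an element
of the homogeneous component of degree `g`. -/
def GradedSubst (𝒜 : G → Submodule F A) (a : ℕ × G → A) : Prop := ∀ p : ℕ × G, a p ∈ 𝒜 p.2

/-- `f` is a graded polynomial identity. -/
def IsGradedIdentity (𝒜 : G → Submodule F A) (f : FreeAlgebra F (ℕ × G)) : Prop :=
  ∀ a : ℕ × G → A, GradedSubst 𝒜 a → FreeAlgebra.lift F a f = 0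

/-- `f` is a graded central polynomial. -/
def IsGradedCentral (𝒜 : G → Submodule F A) (f : FreeAlgebra F (ℕ × G)) : Prop :=
  ¬ IsGradedIdentity 𝒜 f ∧
    ∀ a : ℕ × G → A, GradedSubst 𝒜 a → FreeAlgebra.lift F a f ∈ Set.center A

/-- `f` only uses (graded) variables from the set `S`. -/
def UsesVars (S : Set (ℕ × G)) (f : FreeAlgebra F (ℕ × G)) : Prop :=
  f ∈ Algebra.adjoin F (FreeAlgebra.ι F '' S)

/-- The primeness property for graded central polynomials: if a product of two polynomials
in disjoint sets of variables is graded central, then both factors are graded central. -/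
def HasGradedPrimeness (𝒜 : G → Submodule F A) : Prop :=
  ∀ (S T : Set (ℕ × G)) (f g : FreeAlgebra F (ℕ × G)),
    Disjoint S T → UsesVars S f → UsesVars T g →
    IsGradedCentral 𝒜 (f * g) →
    IsGradedCentral 𝒜 f ∧ IsGradedCentral 𝒜 g

end GradedDefs

section Regular

variable {F : Type*} [Field F] {H : Type*} [CommGroup H] {R : Type*} [Ring R] [Algebra F R]

/-- A regular grading of `R` by an abelian group `H` with commutation function `β`:
it is a grading such that (P1) every tuple of degrees is realized by elements with
non-zero product and (P2) homogeneous elements commute up to the scalar given by `β`. -/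
structure IsRegularGrading [DecidableEq H] (ℛ : H → Submodule F R) (β : H → H → Fˣ) :
    Prop where
  internal : DirectSum.IsInternal ℛ
  mul_mem : ∀ {g h : H} {x y : R}, x ∈ ℛ g → y ∈ ℛ h → x * y ∈ ℛ (g * h)
  prod_ne_zero : ∀ (m : ℕ) (hs : Fin m → H), ∃ r : Fin m → R,
    (∀ i, r i ∈ ℛ (hs i)) ∧ (List.ofFn r).prod ≠ 0
  comm : ∀ {g h : H} {x y : R}, x ∈ ℛ g → y ∈ ℛ h → x * y = ((β g h : Fˣ) : F) • (y * x)

end Regular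

section CondR1

variable {F : Type*} [Field F] {H : Type*} [CommGroup H] {R : Type*} [Ring R] [Algebra F R]

/-- Condition (R1): for any two monomials in disjoint sets of variables that are not
`H`-graded identities for `R`, their product is not an `H`-graded identity for `R`. -/
def CondR1 (ℛ : H → Submodule F R) : Prop :=
  ∀ w₁ w₂ : List (ℕ × H), w₁.Disjoint w₂ →
    ¬ IsGradedIdentity ℛ ((w₁.map (FreeAlgebra.ι F)).prod) →
    ¬ IsGradedIdentity ℛ ((w₂.map (FreeAlgebra.ι F)).prod) →
    ¬ IsGradedIdentity ℛ ((w₁.map (FreeAlgebra.ι F)).prod * (w₂.map (FreeAlgebra.ι F)).prod)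

end CondR1

section RelativelyFree

variable {F : Type*} [Field F] {H : Type*} [CommGroup H]
variable {R : Type*} [Ring R] [Algebra F R]

/-- The two-sided ideal `Id_H(R)` of `H`-graded identities of `R` in the free
`H`-graded algebra. -/
def gradedIdIdeal (ℛ : H → Submodule F R) : TwoSidedIdeal (FreeAlgebra F (ℕ × H)) :=
  TwoSidedIdeal.mk' {f | IsGradedIdentity ℛ f}
    (fun a _ => by simp)
    (fun {x y} hx hy a ha => by simp [map_add, hx a ha, hy a ha])
    (fun {x} hx a ha => by simp [hx a ha])
    (fun {x y} hy a ha => by simp [map_mul, hy a ha])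
    (fun {x y} hx a ha => by simp [map_mul, hx a ha])

/-- The homogeneous component of degree `h` of the canonical `H`-grading of the free
`H`-graded algebra: the span of the monomials whose degrees multiply to `h`. -/
def FreeComp (F : Type*) [Field F] (H : Type*) [CommGroup H] (h : H) :
    Submodule F (FreeAlgebra F (ℕ × H)) :=
  Submodule.span F
    {m | ∃ w : List (ℕ × H), (w.map Prod.snd).prod = h ∧ m = (w.map (FreeAlgebra.ι F)).prod}

/-- The relatively free algebra `R' = F⟨X_H⟩ / Id_H(R)`. -/
abbrev RelFree (ℛ : H → Submodule F R) : Type _ := (gradedIdIdeal ℛ).ringCon.Quotient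

end RelativelyFree

section Aux

open FreeAlgebra
set_option linter.unusedSectionVars false

variable {F : Type*} [Field F] {H : Type*} [CommGroup H] [DecidableEq H]
variable {R : Type*} [Ring R] [Algebra F R]

/-- Abbreviation for the monomial attached to a word. -/
def Mon (F : Type*) [Field F] {H : Type*} (w : List (ℕ × H)) : FreeAlgebra F (ℕ × H) :=
  (w.map (FreeAlgebra.ι F)).prod

@[simp] lemma Mon_nil : Mon F ([] : List (ℕ × H)) = 1 := rfl

@[simp] lemma Mon_cons (p : ℕ × H) (w : List (ℕ × H)) :
    Mon F (p :: w) = FreeAlgebra.ι F p * Mon F w := by simp [Mon]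

lemma Mon_append (w₁ w₂ : List (ℕ × H)) : Mon F (w₁ ++ w₂) = Mon F w₁ * Mon F w₂ := by
  simp [Mon]

lemma mem_gradedIdIdeal {ℛ : H → Submodule F R} {x : FreeAlgebra F (ℕ × H)} :
    x ∈ gradedIdIdeal ℛ ↔ IsGradedIdentity ℛ x := by
  exact TwoSidedIdeal.mem_mk' _ _ _ _ _ _ x

lemma smul_mem_gradedIdIdeal {ℛ : H → Submodule F R} (c : F) {x : FreeAlgebra F (ℕ × H)}
    (hx : x ∈ gradedIdIdeal ℛ) : c • x ∈ gradedIdIdeal ℛ := by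
  rw [Algebra.smul_def]
  exact (gradedIdIdeal ℛ).mul_mem_left _ _ hx

/-- Uniqueness of homogeneous decompositions in an internally graded algebra. -/
lemma grading_sum_eq_zero {ℛ : H → Submodule F R} (hint : DirectSum.IsInternal ℛ)
    (s : Finset H) (x : H → R) (hx : ∀ h ∈ s, x h ∈ ℛ h)
    (hsum : ∑ h ∈ s, x h = 0) : ∀ h ∈ s, x h = 0 := by
  classical
  intro h₀ h₀s
  set D : DirectSum H (fun h => ℛ h) := ∑ h ∈ s.attach, DirectSum.of (fun h => ℛ h) h.1 ⟨x h.1, hx h.1 h.2⟩ with hD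
  have hcoe : DirectSum.coeAddMonoidHom ℛ D = 0 := by
    rw [hD, map_sum]
    simp only [DirectSum.coeAddMonoidHom_of]
    rw [Finset.sum_attach s (fun h => x h)]
    exact hsum
  have hD0 : D = 0 := by
    apply hint.injective
    rw [hcoe]; simp
  have happ : D h₀ = ⟨x h₀, hx h₀ h₀s⟩ := by
    rw [hD, DFinsupp.finset_sum_apply]
    rw [Finset.sum_eq_single_of_mem (⟨h₀, h₀s⟩ : {x // x ∈ s}) (Finset.mem_attach _ _)]
    · exact DirectSum.of_eq_same _ _
    · intro b _ hb
      exact DirectSum.of_eq_of_ne _ _ _ (fun hc => hb (Subtype.ext hc.symm))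
  have : (⟨x h₀, hx h₀ h₀s⟩ : ℛ h₀) = 0 := by rw [← happ, hD0]; rfl
  exact congrArg Subtype.val this


/-- The identity component of an internal group grading contains `1`. -/
lemma one_mem_grade_one {ℛ : H → Submodule F R} (hint : DirectSum.IsInternal ℛ)
    (hmul : ∀ {g h : H} {x y : R}, x ∈ ℛ g → y ∈ ℛ h → x * y ∈ ℛ (g * h)) :
    (1 : R) ∈ ℛ 1 := by
  classical
  obtain ⟨d, hd⟩ := hint.surjective 1
  have hsum : ∑ h ∈ d.support, ((d h : R)) = 1 := by
    rw [← hd, DirectSum.coeAddMonoidHom_eq_dfinsuppSum]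
    rfl
  have key : ∀ (k : H) (y : R), y ∈ ℛ k → y * (d 1 : R) = y := by
    intro k y hy
    set s : Finset H := insert k (d.support.image (fun h => k * h)) with hs
    set xf : H → R := fun g => y * (d (k⁻¹ * g) : R) - (if g = k then y else 0) with hxf
    have hmem : ∀ g ∈ s, xf g ∈ ℛ g := by
      intro g _
      apply Submodule.sub_mem
      · have h1 : y * (d (k⁻¹ * g) : R) ∈ ℛ (k * (k⁻¹ * g)) := hmul hy (d (k⁻¹ * g)).2
        simpa [mul_inv_cancel_left] using h1
      · by_cases hg : g = k
        · subst hg; simpa using hy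
        · simp [hg]
    have hsum1 : ∑ g ∈ s, y * (d (k⁻¹ * g) : R) = y := by
      rw [hs, Finset.sum_insert_of_eq_zero_if_notMem]
      · rw [Finset.sum_image (by intros a _ b _ hab; exact mul_left_cancel hab)]
        have hc : ∀ h ∈ d.support, y * (d (k⁻¹ * (k * h)) : R) = y * (d h : R) := by
          intro h _; rw [inv_mul_cancel_left]
        rw [Finset.sum_congr rfl hc, ← Finset.mul_sum, hsum, mul_one]
      · intro hk
        have h1 : (1 : H) ∉ d.support := fun h1s =>
          hk (Finset.mem_image.mpr ⟨1, h1s, by simp⟩)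
        rw [inv_mul_cancel, DFinsupp.notMem_support_iff.mp h1]
        simp
    have hsum2 : ∑ g ∈ s, (if g = k then y else (0 : R)) = y := by
      rw [Finset.sum_ite_eq' s k (fun _ => y)]
      simp [hs]
    have hsum0 : ∑ g ∈ s, xf g = 0 := by
      rw [hxf]
      rw [Finset.sum_sub_distrib, hsum1, hsum2, sub_self]
    have hk0 := grading_sum_eq_zero hint s xf hmem hsum0 k (Finset.mem_insert_self _ _)
    have h2 : y * (d (k⁻¹ * k) : R) - y = 0 := by simpa [hxf] using hk0
    rw [inv_mul_cancel] at h2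
    exact sub_eq_zero.mp h2
  have hall : ∀ y : R, y * (d 1 : R) = y := by
    intro y
    have hy : y ∈ (⊤ : Submodule F R) := trivial
    rw [← hint.submodule_iSup_eq_top] at hy
    refine Submodule.iSup_induction ℛ (motive := fun y => y * (d 1 : R) = y) hy
      (fun i x hx => key i x hx) (by simp) ?_
    intro a b ha hb
    rw [add_mul, ha, hb]
  have h1 := hall 1
  rw [one_mul] at h1
  exact h1 ▸ (d 1).2


lemma lift_mon (a : ℕ × H → R) : ∀ w : List (ℕ × H),
    FreeAlgebra.lift F a (Mon F w) = (w.map a).prod := by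
  intro w
  induction w with
  | nil => simp
  | cons p w ih => simp [ih]

lemma lift_mon_mem {ℛ : H → Submodule F R} (hone : (1 : R) ∈ ℛ 1)
    (hmul : ∀ {g h : H} {x y : R}, x ∈ ℛ g → y ∈ ℛ h → x * y ∈ ℛ (g * h))
    {a : ℕ × H → R} (ha : GradedSubst ℛ a) :
    ∀ w : List (ℕ × H), FreeAlgebra.lift F a (Mon F w) ∈ ℛ ((w.map Prod.snd).prod) := by
  intro w
  induction w with
  | nil => simpa using hone
  | cons p w ih =>
    simp only [Mon_cons, map_mul, FreeAlgebra.lift_ι_apply, List.map_cons, List.prod_cons]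
    exact hmul (ha p) ih

lemma lift_freeComp_mem {ℛ : H → Submodule F R} (hone : (1 : R) ∈ ℛ 1)
    (hmul : ∀ {g h : H} {x y : R}, x ∈ ℛ g → y ∈ ℛ h → x * y ∈ ℛ (g * h))
    {a : ℕ × H → R} (ha : GradedSubst ℛ a) {h : H} {f : FreeAlgebra F (ℕ × H)}
    (hf : f ∈ FreeComp F H h) : FreeAlgebra.lift F a f ∈ ℛ h := by
  induction hf using Submodule.span_induction with
  | mem m hm =>
    obtain ⟨w, hw, rfl⟩ := hm
    exact hw ▸ lift_mon_mem hone hmul ha w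
  | zero => simpa using (ℛ h).zero_mem
  | add x y _ _ hx hy => rw [map_add]; exact (ℛ h).add_mem hx hy
  | smul c x _ hx => rw [map_smul]; exact (ℛ h).smul_mem c hx

variable {β : H → H → Fˣ}

lemma beta_mul_left {ℛ : H → Submodule F R} (hreg : IsRegularGrading ℛ β) (g₁ g₂ h : H) :
    ((β (g₁ * g₂) h : Fˣ) : F) = ((β g₁ h : Fˣ) : F) * ((β g₂ h : Fˣ) : F) := by
  obtain ⟨r, hr, hne⟩ := hreg.prod_ne_zero 3 ![g₁, g₂, h]
  have hx : r 0 ∈ ℛ g₁ := by simpa using hr 0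
  have hy : r 1 ∈ ℛ g₂ := by simpa using hr 1
  have hz : r 2 ∈ ℛ h := by simpa using hr 2
  set x := r 0; set y := r 1; set z := r 2
  have hprod : x * y * z ≠ 0 := by
    intro h0
    apply hne
    simp [List.ofFn_succ, ← mul_assoc, h0]
    exact h0
  have e1 : (x * y) * z = ((β (g₁ * g₂) h : Fˣ) : F) • (z * (x * y)) :=
    hreg.comm (hreg.mul_mem hx hy) hz
  have e2 : (x * y) * z
      = (((β g₂ h : Fˣ) : F) * ((β g₁ h : Fˣ) : F)) • (z * (x * y)) := by
    calc (x * y) * z = x * (y * z) := by rw [mul_assoc]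
    _ = x * (((β g₂ h : Fˣ) : F) • (z * y)) := by rw [hreg.comm hy hz]
    _ = ((β g₂ h : Fˣ) : F) • ((x * z) * y) := by
        rw [mul_smul_comm, ← mul_assoc]
    _ = ((β g₂ h : Fˣ) : F) • ((((β g₁ h : Fˣ) : F) • (z * x)) * y) := by
        rw [hreg.comm hx hz]
    _ = (((β g₂ h : Fˣ) : F) * ((β g₁ h : Fˣ) : F)) • (z * (x * y)) := by
        rw [smul_mul_assoc, smul_smul, mul_assoc]
  have hzxy : z * (x * y) ≠ 0 := by
    intro h0
    rw [h0, smul_zero] at e1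
    exact hprod e1
  have := e1.symm.trans e2
  have hcancel : ((β (g₁ * g₂) h : Fˣ) : F)
      = ((β g₂ h : Fˣ) : F) * ((β g₁ h : Fˣ) : F) := by
    by_contra hne2
    apply hzxy
    have hsub : (((β (g₁ * g₂) h : Fˣ) : F)
        - ((β g₂ h : Fˣ) : F) * ((β g₁ h : Fˣ) : F)) • (z * (x * y)) = 0 := by
      rw [sub_smul, this, sub_self]
    rcases smul_eq_zero.mp hsub with h' | h'
    · exact absurd (sub_eq_zero.mp h') hne2
    · exact h'
  rw [hcancel, mul_comm]

lemma beta_one_left {ℛ : H → Submodule F R} (hreg : IsRegularGrading ℛ β) (h : H) :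
    ((β 1 h : Fˣ) : F) = 1 := by
  have := beta_mul_left hreg 1 1 h
  rw [mul_one] at this
  have hne : ((β 1 h : Fˣ) : F) ≠ 0 := Units.ne_zero _
  have h2 : ((β 1 h : Fˣ) : F) * 1 = ((β 1 h : Fˣ) : F) * ((β 1 h : Fˣ) : F) := by
    rw [mul_one]; exact this
  exact (mul_left_cancel₀ hne h2).symm

lemma comm_mem_I {ℛ : H → Submodule F R} (hreg : IsRegularGrading ℛ β) (p q : ℕ × H) :
    FreeAlgebra.ι F p * FreeAlgebra.ι F q
      - ((β p.2 q.2 : Fˣ) : F) • (FreeAlgebra.ι F q * FreeAlgebra.ι F p) ∈ gradedIdIdeal ℛ := by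
  rw [mem_gradedIdIdeal]
  intro a ha
  simp only [map_sub, map_smul, map_mul, FreeAlgebra.lift_ι_apply]
  rw [hreg.comm (ha p) (ha q), sub_self]

lemma mon_comm_mem_I {ℛ : H → Submodule F R} (hreg : IsRegularGrading ℛ β) :
    ∀ (w : List (ℕ × H)) (p : ℕ × H),
    Mon F w * FreeAlgebra.ι F p
      - ((β ((w.map Prod.snd).prod) p.2 : Fˣ) : F) • (FreeAlgebra.ι F p * Mon F w)
      ∈ gradedIdIdeal ℛ := by
  intro w
  induction w with
  | nil =>
    intro p
    simp only [Mon_nil, List.map_nil, List.prod_nil, one_mul, mul_one, beta_one_left hreg,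
      one_smul, sub_self]
    exact (gradedIdIdeal ℛ).zero_mem
  | cons p' w ih =>
    intro p
    set M := Mon F w with hM
    set b₁ : F := ((β p'.2 p.2 : Fˣ) : F) with hb₁
    set b₂ : F := ((β ((w.map Prod.snd).prod) p.2 : Fˣ) : F) with hb₂
    have hT₁ : FreeAlgebra.ι F p' * (M * FreeAlgebra.ι F p - b₂ • (FreeAlgebra.ι F p * M))
        ∈ gradedIdIdeal ℛ := (gradedIdIdeal ℛ).mul_mem_left _ _ (ih p)
    have hT₂ : (b₂ • ((FreeAlgebra.ι F p' * FreeAlgebra.ι F p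
        - b₁ • (FreeAlgebra.ι F p * FreeAlgebra.ι F p')) * M)) ∈ gradedIdIdeal ℛ :=
      smul_mem_gradedIdIdeal _ ((gradedIdIdeal ℛ).mul_mem_right _ _ (comm_mem_I hreg p' p))
    have hsum := (gradedIdIdeal ℛ).add_mem hT₁ hT₂
    have hco : ((β ((p' :: w).map Prod.snd).prod p.2 : Fˣ) : F) = b₂ * b₁ := by
      rw [hb₁, hb₂, List.map_cons, List.prod_cons, beta_mul_left hreg, mul_comm]
    rw [Mon_cons, hco]
    convert hsum using 1
    simp only [mul_sub, sub_mul, smul_sub, mul_smul_comm, smul_mul_assoc, smul_smul,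
      mul_assoc, ← hM]
    abel

lemma freeComp_comm_mem_I {ℛ : H → Submodule F R} (hreg : IsRegularGrading ℛ β)
    {h : H} {f : FreeAlgebra F (ℕ × H)} (hf : f ∈ FreeComp F H h) (p : ℕ × H) :
    f * FreeAlgebra.ι F p - ((β h p.2 : Fˣ) : F) • (FreeAlgebra.ι F p * f)
      ∈ gradedIdIdeal ℛ := by
  induction hf using Submodule.span_induction with
  | mem m hm =>
    obtain ⟨w, hw, rfl⟩ := hm
    exact hw ▸ mon_comm_mem_I hreg w p
  | zero => simpa using (gradedIdIdeal ℛ).zero_mem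
  | add x y _ _ hx hy =>
    have := (gradedIdIdeal ℛ).add_mem hx hy
    convert this using 1
    rw [add_mul, mul_add, smul_add]
    abel
  | smul c x _ hx =>
    have := smul_mem_gradedIdIdeal c hx
    convert this using 1
    rw [smul_sub, smul_mul_assoc, mul_smul_comm, smul_comm c]

lemma perm_mon {ℛ : H → Submodule F R} (hreg : IsRegularGrading ℛ β)
    {w₁ w₂ : List (ℕ × H)} (hp : w₁.Perm w₂) :
    ∃ u : Fˣ, Mon F w₁ - ((u : Fˣ) : F) • Mon F w₂ ∈ gradedIdIdeal ℛ := by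
  induction hp with
  | nil => exact ⟨1, by simpa using (gradedIdIdeal ℛ).zero_mem⟩
  | cons x h ih =>
    obtain ⟨u, hu⟩ := ih
    refine ⟨u, ?_⟩
    have := (gradedIdIdeal ℛ).mul_mem_left (FreeAlgebra.ι F x) _ hu
    convert this using 1
    rw [Mon_cons, Mon_cons, mul_sub, mul_smul_comm]
  | swap x y l =>
    refine ⟨β y.2 x.2, ?_⟩
    have := (gradedIdIdeal ℛ).mul_mem_right _ (Mon F l) (comm_mem_I hreg y x)
    convert this using 1
    rw [Mon_cons, Mon_cons, Mon_cons, Mon_cons, sub_mul, smul_mul_assoc,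
      mul_assoc, mul_assoc]
  | trans h₁ h₂ ih₁ ih₂ =>
    obtain ⟨u₁, hu₁⟩ := ih₁
    obtain ⟨u₂, hu₂⟩ := ih₂
    refine ⟨u₁ * u₂, ?_⟩
    have h3 := smul_mem_gradedIdIdeal ((u₁ : Fˣ) : F) hu₂
    have := (gradedIdIdeal ℛ).add_mem hu₁ h3
    convert this using 1
    rw [smul_sub, smul_smul, Units.val_mul]
    abel

/-- The multidegree of a word. -/
noncomputable def mdeg : List (ℕ × H) → ((ℕ × H) →₀ ℕ) := fun w => (w.map fun p => Finsupp.single p 1).sum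

@[simp] lemma mdeg_nil : mdeg ([] : List (ℕ × H)) = 0 := rfl

@[simp] lemma mdeg_cons (p : ℕ × H) (w : List (ℕ × H)) :
    mdeg (p :: w) = Finsupp.single p 1 + mdeg w := by simp [mdeg]

lemma mdeg_count (w : List (ℕ × H)) (p : ℕ × H) :
    mdeg w p = Multiset.count p (↑w : Multiset (ℕ × H)) := by
  induction w with
  | nil => simp
  | cons x w ih =>
    rw [mdeg_cons, Finsupp.add_apply, ih, ← Multiset.cons_coe, Multiset.count_cons,
      Finsupp.single_apply, add_comm]
    congr 1
    by_cases h : x = p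
    · subst h; simp
    · simp [h, Ne.symm h]

lemma mdeg_eq_iff {w₁ w₂ : List (ℕ × H)} :
    mdeg w₁ = mdeg w₂ ↔ (↑w₁ : Multiset (ℕ × H)) = ↑w₂ := by
  constructor
  · intro h
    rw [Multiset.ext]
    intro p
    rw [← mdeg_count, ← mdeg_count, h]
  · intro h
    ext p
    rw [mdeg_count, mdeg_count, h]

lemma prod_map_eq (t : ℕ × H → F) (w : List (ℕ × H)) :
    (w.map t).prod = (mdeg w).prod fun p n => t p ^ n := by
  induction w with
  | nil => simp
  | cons x w ih =>
    rw [List.map_cons, List.prod_cons, ih, mdeg_cons]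
    rw [Finsupp.prod_add_index' (fun a => pow_zero _) (fun a m n => pow_add _ _ _)]
    have hs : ((Finsupp.single x 1).prod fun p n => t p ^ n) = t x := by simp
    rw [hs]

lemma lift_scale (a : ℕ × H → R) (t : ℕ × H → F) (w : List (ℕ × H)) :
    FreeAlgebra.lift F (fun p => t p • a p) (Mon F w)
      = ((mdeg w).prod fun p n => t p ^ n) • FreeAlgebra.lift F a (Mon F w) := by
  rw [← prod_map_eq]
  induction w with
  | nil => simp
  | cons x w ih =>
    simp only [Mon_cons, map_mul, FreeAlgebra.lift_ι_apply, List.map_cons, List.prod_cons, ih]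
    rw [smul_mul_assoc, mul_smul_comm, smul_smul]

/-- Separation of monomials with distinct multidegrees modulo the ideal of graded
identities: the key use of the infinite base field. -/
lemma sep {ℛ : H → Submodule F R} [Infinite F] (n : ℕ) (v : Fin n → List (ℕ × H))
    (c : Fin n → F)
    (hI : (∑ i, c i • Mon F (v i)) ∈ gradedIdIdeal ℛ) (i₀ : Fin n) :
    (∑ j ∈ Finset.univ.filter (fun j => (↑(v j) : Multiset (ℕ × H)) = ↑(v i₀)),
      c j • Mon F (v j)) ∈ gradedIdIdeal ℛ := by
  classical
  rw [mem_gradedIdIdeal] at hI ⊢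
  intro a ha
  have key : ∀ t : ℕ × H → F,
      ∑ i, ((mdeg (v i)).prod fun p k => t p ^ k) •
        (c i • FreeAlgebra.lift F a (Mon F (v i))) = 0 := by
    intro t
    have hat : GradedSubst ℛ (fun p => t p • a p) := fun p => (ℛ p.2).smul_mem _ (ha p)
    have h0 := hI _ hat
    rw [map_sum] at h0
    calc ∑ i, ((mdeg (v i)).prod fun p k => t p ^ k) •
          (c i • FreeAlgebra.lift F a (Mon F (v i)))
        = ∑ i, FreeAlgebra.lift F (fun p => t p • a p) (c i • Mon F (v i)) := by
          refine Finset.sum_congr rfl fun i _ => ?_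
          rw [map_smul, lift_scale, smul_comm]
      _ = 0 := h0
  rw [map_sum]
  refine (Module.forall_dual_apply_eq_zero_iff F _).mp fun φ => ?_
  set P : MvPolynomial (ℕ × H) F := ∑ i, MvPolynomial.monomial (mdeg (v i))
    (φ (c i • FreeAlgebra.lift F a (Mon F (v i)))) with hP
  have hPeval : ∀ t : ℕ × H → F, MvPolynomial.eval t P = 0 := by
    intro t
    rw [hP, map_sum]
    have : ∀ i, MvPolynomial.eval t (MvPolynomial.monomial (mdeg (v i))
        (φ (c i • FreeAlgebra.lift F a (Mon F (v i)))))
        = φ (((mdeg (v i)).prod fun p k => t p ^ k) •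
          (c i • FreeAlgebra.lift F a (Mon F (v i)))) := by
      intro i
      simp only [MvPolynomial.eval_monomial, map_smul, smul_eq_mul]
      ring
    rw [Finset.sum_congr rfl fun i _ => this i, ← map_sum, key, map_zero]
  have hP0 : P = 0 := MvPolynomial.funext (q := 0) (by simpa using hPeval)
  have hcoeff := congrArg (MvPolynomial.coeff (mdeg (v i₀))) hP0
  rw [hP, MvPolynomial.coeff_zero] at hcoeff
  rw [MvPolynomial.coeff_sum] at hcoeff
  simp only [MvPolynomial.coeff_monomial] at hcoeff
  calc φ (∑ j ∈ Finset.univ.filter (fun j => (↑(v j) : Multiset (ℕ × H)) = ↑(v i₀)),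
        FreeAlgebra.lift F a (c j • Mon F (v j)))
      = ∑ j ∈ Finset.univ.filter (fun j => (↑(v j) : Multiset (ℕ × H)) = ↑(v i₀)),
        φ (c j • FreeAlgebra.lift F a (Mon F (v j))) := by
        rw [map_sum]
        exact Finset.sum_congr rfl fun j _ => by rw [map_smul]
    _ = ∑ j, if mdeg (v j) = mdeg (v i₀) then
          φ (c j • FreeAlgebra.lift F a (Mon F (v j))) else 0 := by
        rw [Finset.sum_filter]
        exact Finset.sum_congr rfl fun j _ => by
          simp only [mdeg_eq_iff]
    _ = 0 := hcoeff

lemma single_var_not_identity {ℛ : H → Submodule F R} (hreg : IsRegularGrading ℛ β)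
    (q : ℕ × H) : ¬ IsGradedIdentity ℛ (Mon F [q]) := by
  obtain ⟨r, hr, hne⟩ := hreg.prod_ne_zero 1 (fun _ => q.2)
  have hr0 : r 0 ∈ ℛ q.2 := hr 0
  have hne0 : r 0 ≠ 0 := by simpa using hne
  intro hid
  set a : ℕ × H → R := fun p => if p = q then r 0 else 0 with ha
  have hga : GradedSubst ℛ a := by
    intro p
    by_cases hp : p = q
    · subst hp; simpa [ha] using hr0
    · simp [ha, hp]
  have := hid a hga
  rw [lift_mon] at this
  simp [ha] at this
  exact hne0 this

/-- Homogeneity of the ideal of graded identities. -/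
lemma gradedIdIdeal_homogeneous {ℛ : H → Submodule F R} (hreg : IsRegularGrading ℛ β)
    (s : Finset H) (x : H → FreeAlgebra F (ℕ × H))
    (hx : ∀ h ∈ s, x h ∈ FreeComp F H h)
    (hsum : (∑ h ∈ s, x h) ∈ gradedIdIdeal ℛ) : ∀ h ∈ s, x h ∈ gradedIdIdeal ℛ := by
  have hone : (1 : R) ∈ ℛ 1 := one_mem_grade_one hreg.internal hreg.mul_mem
  intro h hs
  rw [mem_gradedIdIdeal]
  intro a ha
  rw [mem_gradedIdIdeal] at hsum
  have h0 := hsum a ha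
  rw [map_sum] at h0
  exact grading_sum_eq_zero hreg.internal s (fun h => FreeAlgebra.lift F a (x h))
    (fun h hh => lift_freeComp_mem hone hreg.mul_mem ha (hx h hh)) h0 h hs

lemma le_list_sum {l : List ℕ} {a : ℕ} (ha : a ∈ l) : a ≤ l.sum := by
  induction l with
  | nil => simp at ha
  | cons x l ih =>
    rcases List.mem_cons.mp ha with rfl | h
    · simp
    · have := ih h
      simp only [List.sum_cons]
      omega

/-- The kill lemma: a homogeneous element of non-neutral degree that commutes with all
variables modulo the graded identities is itself a graded identity. -/
lemma kill {ℛ : H → Submodule F R} [Infinite F] (hreg : IsRegularGrading ℛ β)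
    (hmin : ∀ h : H, h ≠ 1 → ∃ h' : H, β h h' ≠ 1) (hR1 : CondR1 ℛ)
    {h : H} (hne : h ≠ 1) {f : FreeAlgebra F (ℕ × H)} (hf : f ∈ FreeComp F H h)
    (hc : ∀ p : ℕ × H, FreeAlgebra.ι F p * f - f * FreeAlgebra.ι F p ∈ gradedIdIdeal ℛ) :
    f ∈ gradedIdIdeal ℛ := by
  classical
  obtain ⟨h', hb⟩ := hmin h hne
  have hbF : ((β h h' : Fˣ) : F) ≠ 1 := by
    intro h1
    exact hb (Units.ext h1)
  -- step 1: x_q f ∈ I for every variable q of degree h'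
  have hq : ∀ q : ℕ × H, q.2 = h' →
      FreeAlgebra.ι F q * f ∈ gradedIdIdeal ℛ := by
    intro q hq2
    have h1 := hc q
    have h2 := freeComp_comm_mem_I hreg hf q
    have h3 : (1 - ((β h q.2 : Fˣ) : F)) • (FreeAlgebra.ι F q * f) ∈ gradedIdIdeal ℛ := by
      have := (gradedIdIdeal ℛ).add_mem h1 h2
      convert this using 1
      rw [sub_smul, one_smul]
      abel
    have hcoeff : (1 - ((β h q.2 : Fˣ) : F)) ≠ 0 := by
      rw [hq2]
      intro h0
      exact hbF ((sub_eq_zero.mp h0).symm)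
    have := smul_mem_gradedIdIdeal (1 - ((β h q.2 : Fˣ) : F))⁻¹ h3
    rwa [smul_smul, inv_mul_cancel₀ hcoeff, one_smul] at this
  -- step 2: canonical representation of f modulo I
  obtain ⟨n, c, g, hgsum⟩ := (Submodule.mem_span_set' (R := F)).mp (by unfold FreeComp at hf; exact hf)
  have hget : ∀ i, ∃ w : List (ℕ × H),
      ((w.map Prod.snd).prod = h) ∧ (g i : FreeAlgebra F (ℕ × H)) = Mon F w := (fun i => (g i).2)
  choose w hwdeg hwmon using hget
  set W : Fin n → List (ℕ × H) := fun i => (↑(w i) : Multiset (ℕ × H)).toList with hW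
  have hWperm : ∀ i, (w i).Perm (W i) := by
    intro i
    rw [← Multiset.coe_eq_coe, hW, Multiset.coe_toList]
  have hWcoe : ∀ i, (↑(W i) : Multiset (ℕ × H)) = ↑(w i) := by
    intro i
    rw [hW, Multiset.coe_toList]
  choose u hu using fun i => perm_mon (β := β) hreg (hWperm i)
  set gE : FreeAlgebra F (ℕ × H) := ∑ i, (c i * ((u i : Fˣ) : F)) • Mon F (W i) with hgE
  have hfg : f - gE ∈ gradedIdIdeal ℛ := by
    rw [← hgsum, hgE, ← Finset.sum_sub_distrib]
    apply sum_mem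
    intro i _
    have : c i • (g i : FreeAlgebra F (ℕ × H)) - (c i * ((u i : Fˣ) : F)) • Mon F (W i)
        = c i • (Mon F (w i) - ((u i : Fˣ) : F) • Mon F (W i)) := by
      rw [hwmon i, smul_sub, smul_smul]
    rw [this]
    exact smul_mem_gradedIdIdeal _ (hu i)
  -- fresh variable
  set N : ℕ := (∑ i, ((W i).map Prod.fst).sum) + 1 with hN
  set q : ℕ × H := (N, h') with hqdef
  have hqW : ∀ i, q ∉ W i := by
    intro i hmem
    have h1 : N ∈ (W i).map Prod.fst := List.mem_map.mpr ⟨q, hmem, rfl⟩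
    have h2 : N ≤ ((W i).map Prod.fst).sum := le_list_sum h1
    have h3 : ((W i).map Prod.fst).sum ≤ ∑ j, ((W j).map Prod.fst).sum :=
      Finset.single_le_sum (f := fun j => ((W j).map Prod.fst).sum)
        (fun j _ => Nat.zero_le _) (Finset.mem_univ i)
    omega
  have hqg : FreeAlgebra.ι F q * gE ∈ gradedIdIdeal ℛ := by
    have h1 := hq q rfl
    have h2 := (gradedIdIdeal ℛ).mul_mem_left (FreeAlgebra.ι F q) _ hfg
    have := (gradedIdIdeal ℛ).sub_mem h1 h2
    convert this using 1
    rw [mul_sub]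
    abel
  -- apply separation
  have hqg' : (∑ i, (c i * ((u i : Fˣ) : F)) • Mon F (q :: W i)) ∈ gradedIdIdeal ℛ := by
    convert hqg using 1
    rw [hgE, Finset.mul_sum]
    refine Finset.sum_congr rfl fun i _ => ?_
    rw [Mon_cons, mul_smul_comm]
  have hsep := fun i₀ => sep n (fun i => q :: W i) (fun i => c i * ((u i : Fˣ) : F)) hqg' i₀
  -- fibers
  have hfiber_eq : ∀ i₀ j, (↑(q :: W j) : Multiset (ℕ × H)) = ↑(q :: W i₀) → W j = W i₀ := by
    intro i₀ j hj
    rw [← Multiset.cons_coe, ← Multiset.cons_coe] at hj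
    have h1 : (↑(W j) : Multiset (ℕ × H)) = ↑(W i₀) := (Multiset.cons_inj_right q).mp hj
    rw [hWcoe, hWcoe] at h1
    rw [hW]
    simp only [h1]
  have hEach : ∀ i₀ : Fin n,
      (∑ j ∈ Finset.univ.filter
        (fun j => (↑(q :: W j) : Multiset (ℕ × H)) = ↑(q :: W i₀)),
        (c j * ((u j : Fˣ) : F))) • Mon F (W i₀) ∈ gradedIdIdeal ℛ := by
    intro i₀
    set κ : F := ∑ j ∈ Finset.univ.filter
      (fun j => (↑(q :: W j) : Multiset (ℕ × H)) = ↑(q :: W i₀)),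
      (c j * ((u j : Fˣ) : F)) with hκ
    have hsep' : κ • (FreeAlgebra.ι F q * Mon F (W i₀)) ∈ gradedIdIdeal ℛ := by
      have := hsep i₀
      rw [← Mon_cons]
      rw [hκ, Finset.sum_smul]
      convert this using 1
      refine Finset.sum_congr rfl fun j hj => ?_
      rw [hfiber_eq i₀ j (Finset.mem_filter.mp hj).2]
    rcases eq_or_ne κ 0 with h0 | h0
    · rw [h0, zero_smul]
      exact (gradedIdIdeal ℛ).zero_mem
    · have hmonI : FreeAlgebra.ι F q * Mon F (W i₀) ∈ gradedIdIdeal ℛ := by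
        have := smul_mem_gradedIdIdeal κ⁻¹ hsep'
        rwa [smul_smul, inv_mul_cancel₀ h0, one_smul] at this
      have hdis : List.Disjoint [q] (W i₀) := by
        intro x hx
        simp only [List.mem_singleton] at hx
        subst hx
        exact fun hmem => hqW i₀ hmem
      have hnid1 : ¬ IsGradedIdentity ℛ ((([q] : List (ℕ × H)).map (FreeAlgebra.ι F)).prod) :=
        single_var_not_identity hreg q
      by_cases hnid2 : IsGradedIdentity ℛ (((W i₀).map (FreeAlgebra.ι F)).prod)
      · exact smul_mem_gradedIdIdeal κ (mem_gradedIdIdeal.mpr hnid2)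
      · exfalso
        refine hR1 [q] (W i₀) hdis hnid1 hnid2 ?_
        rw [← mem_gradedIdIdeal]
        have : (([q] : List (ℕ × H)).map (FreeAlgebra.ι F)).prod
            * (((W i₀).map (FreeAlgebra.ι F)).prod)
            = FreeAlgebra.ι F q * Mon F (W i₀) := by
          simp [Mon]
        rw [this]
        exact hmonI
  -- conclude
  have hgI : gE ∈ gradedIdIdeal ℛ := by
    rw [hgE]
    rw [← Finset.sum_fiberwise_of_maps_to
      (g := fun i => (↑(q :: W i) : Multiset (ℕ × H)))
      (t := Finset.univ.image (fun i => (↑(q :: W i) : Multiset (ℕ × H))))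
      (fun i _ => Finset.mem_image_of_mem _ (Finset.mem_univ i))]
    apply sum_mem
    intro b hb
    obtain ⟨i₀, _, rfl⟩ := Finset.mem_image.mp hb
    have : ∑ j ∈ Finset.univ.filter
        (fun j => (↑(q :: W j) : Multiset (ℕ × H)) = ↑(q :: W i₀)),
        (c j * ((u j : Fˣ) : F)) • Mon F (W j)
        = (∑ j ∈ Finset.univ.filter
          (fun j => (↑(q :: W j) : Multiset (ℕ × H)) = ↑(q :: W i₀)),
          (c j * ((u j : Fˣ) : F))) • Mon F (W i₀) := by
      rw [Finset.sum_smul]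
      refine Finset.sum_congr rfl fun j hj => ?_
      rw [hfiber_eq i₀ j (Finset.mem_filter.mp hj).2]
    rw [this]
    exact hEach i₀
  have := (gradedIdIdeal ℛ).add_mem hfg hgI
  rwa [sub_add_cancel] at this

lemma ι_mem_freeComp (p : ℕ × H) : FreeAlgebra.ι F p ∈ FreeComp F H p.2 :=
  Submodule.subset_span ⟨[p], by simp, by simp [Mon]⟩

lemma freeComp_mul {g₁ g₂ : H} {x y : FreeAlgebra F (ℕ × H)}
    (hx : x ∈ FreeComp F H g₁) (hy : y ∈ FreeComp F H g₂) :
    x * y ∈ FreeComp F H (g₁ * g₂) := by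
  have h1 : x * y ∈ FreeComp F H g₁ * FreeComp F H g₂ := Submodule.mul_mem_mul hx hy
  have h2 : FreeComp F H g₁ * FreeComp F H g₂ ≤ FreeComp F H (g₁ * g₂) := by
    unfold FreeComp
    rw [Submodule.span_mul_span]
    apply Submodule.span_le.mpr
    rintro z ⟨m₁, hm₁, m₂, hm₂, rfl⟩
    obtain ⟨w₁, hw₁, rfl⟩ := hm₁
    obtain ⟨w₂, hw₂, rfl⟩ := hm₂
    refine Submodule.subset_span ⟨w₁ ++ w₂, ?_, ?_⟩
    · rw [List.map_append, List.prod_append, hw₁, hw₂]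
    · rw [List.map_append, List.prod_append]
  exact h2 h1

lemma exists_mon_rep (f : FreeAlgebra F (ℕ × H)) :
    ∃ (n : ℕ) (c : Fin n → F) (w : Fin n → List (ℕ × H)),
      f = ∑ i, c i • Mon F (w i) := by
  classical
  have hmem : f ∈ Submodule.span F {m : FreeAlgebra F (ℕ × H) | ∃ w : List (ℕ × H), m = Mon F w} := by
    set S := Submodule.span F {m : FreeAlgebra F (ℕ × H) | ∃ w : List (ℕ × H), m = Mon F w}
      with hS
    have hmulc : ∀ x y : FreeAlgebra F (ℕ × H), x ∈ S → y ∈ S → x * y ∈ S := by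
      intro x y hx hy
      have h1 : x * y ∈ S * S := Submodule.mul_mem_mul hx hy
      have h2 : S * S ≤ S := by
        rw [hS, Submodule.span_mul_span]
        apply Submodule.span_le.mpr
        rintro z ⟨m₁, hm₁, m₂, hm₂, rfl⟩
        obtain ⟨w₁, rfl⟩ := hm₁
        obtain ⟨w₂, rfl⟩ := hm₂
        exact Submodule.subset_span ⟨w₁ ++ w₂, (Mon_append w₁ w₂).symm⟩
      exact h2 h1
    induction f using FreeAlgebra.induction with
    | grade0 r =>
      rw [Algebra.algebraMap_eq_smul_one]
      exact S.smul_mem r (Submodule.subset_span ⟨[], rfl⟩)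
    | grade1 x => exact Submodule.subset_span ⟨[x], by simp [Mon]⟩
    | mul a b ha hb => exact hmulc a b ha hb
    | add a b ha hb => exact S.add_mem ha hb
  obtain ⟨n, c, g, hg⟩ := (Submodule.mem_span_set' (R := F)).mp hmem
  refine ⟨n, c, fun i => (g i).2.choose, ?_⟩
  rw [← hg]
  exact Finset.sum_congr rfl fun i _ => by rw [(g i).2.choose_spec]

end Aux

/-- Let `F` be an infinite field and `R` an `F`-algebra with a minimal
regular grading by an abelian group `H` satisfying (R1).  If `R' = F⟨X_H⟩/Id_H(R)` with
its canonical `H`-grading, then `Z(R')` is the image of the neutral homogeneous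
component of `F⟨X_H⟩`. -/
theorem center_of_relatively_free
    (F : Type*) [Field F] [Infinite F]
    {H : Type*} [CommGroup H] [DecidableEq H]
    {R : Type*} [Ring R] [Algebra F R]
    (ℛ : H → Submodule F R) (β : H → H → Fˣ)
    (hreg : IsRegularGrading ℛ β)
    (hmin : ∀ h : H, h ≠ 1 → ∃ h' : H, β h h' ≠ 1)
    (hR1 : CondR1 ℛ) :
    Set.center (RelFree ℛ) =
      (fun x => (gradedIdIdeal ℛ).ringCon.mk' x) ''
        (FreeComp F H 1 : Set (FreeAlgebra F (ℕ × H))) := by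
  classical
  have hsurj : ∀ y : RelFree ℛ, ∃ x : FreeAlgebra F (ℕ × H),
      (gradedIdIdeal ℛ).ringCon.mk' x = y :=
    fun y => Quotient.inductionOn' y (fun x => ⟨x, rfl⟩)
  ext z
  constructor
  · intro hz
    obtain ⟨f₀, rfl⟩ := hsurj z
    have hcent : ∀ g : FreeAlgebra F (ℕ × H),
        g * f₀ - f₀ * g ∈ gradedIdIdeal ℛ := by
      intro g
      have h1 : (gradedIdIdeal ℛ).ringCon.mk' (g * f₀)
          = (gradedIdIdeal ℛ).ringCon.mk' (f₀ * g) := by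
        rw [map_mul, map_mul]
        exact (Semigroup.mem_center_iff.mp hz) ((gradedIdIdeal ℛ).ringCon.mk' g)
      exact (TwoSidedIdeal.rel_iff _ _ _).mp (((gradedIdIdeal ℛ).ringCon.eq).mp h1)
    obtain ⟨n, c, w, hrep⟩ := exists_mon_rep (F := F) f₀
    set k : Fin n → H := fun i => ((w i).map Prod.snd).prod with hk
    set s : Finset H := Finset.univ.image k with hs
    set fc : H → FreeAlgebra F (ℕ × H) :=
      fun h => ∑ i ∈ Finset.univ.filter (fun i => k i = h), c i • Mon F (w i) with hfc
    have hfcmem : ∀ h, fc h ∈ FreeComp F H h := by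
      intro h
      apply Submodule.sum_mem
      intro i hi
      have hki : k i = h := (Finset.mem_filter.mp hi).2
      exact Submodule.smul_mem _ _ (Submodule.subset_span ⟨w i, hki, rfl⟩)
    have hdecomp : f₀ = ∑ h ∈ s, fc h := by
      rw [hrep, hs, hfc]
      exact (Finset.sum_fiberwise_of_maps_to
        (fun i _ => Finset.mem_image_of_mem k (Finset.mem_univ i)) _).symm
    have hcomp : ∀ h ∈ s, ∀ p : ℕ × H,
        FreeAlgebra.ι F p * fc h - fc h * FreeAlgebra.ι F p ∈ gradedIdIdeal ℛ := by
      intro h hhs p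
      set s' : Finset H := s.image (fun g => p.2 * g) with hs'
      set x : H → FreeAlgebra F (ℕ × H) := fun g =>
        FreeAlgebra.ι F p * fc (p.2⁻¹ * g) - fc (p.2⁻¹ * g) * FreeAlgebra.ι F p with hx
      have hxmem : ∀ g ∈ s', x g ∈ FreeComp F H g := by
        intro g _
        have h1 : FreeAlgebra.ι F p * fc (p.2⁻¹ * g) ∈ FreeComp F H (p.2 * (p.2⁻¹ * g)) :=
          freeComp_mul (ι_mem_freeComp p) (hfcmem _)
        have h2 : fc (p.2⁻¹ * g) * FreeAlgebra.ι F p ∈ FreeComp F H ((p.2⁻¹ * g) * p.2) :=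
          freeComp_mul (hfcmem _) (ι_mem_freeComp p)
        rw [mul_inv_cancel_left] at h1
        rw [mul_comm, mul_inv_cancel_left] at h2
        exact Submodule.sub_mem _ h1 h2
      have hsum' : ∑ g ∈ s', x g = FreeAlgebra.ι F p * f₀ - f₀ * FreeAlgebra.ι F p := by
        rw [hs', Finset.sum_image (by intro a _ b _ hab; exact mul_left_cancel hab)]
        have hco : ∀ h' ∈ s, x (p.2 * h')
            = FreeAlgebra.ι F p * fc h' - fc h' * FreeAlgebra.ι F p := by
          intro h' _
          rw [hx]
          simp only [inv_mul_cancel_left]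
        rw [Finset.sum_congr rfl hco, Finset.sum_sub_distrib, ← Finset.mul_sum,
          ← Finset.sum_mul, ← hdecomp]
      have hxI := gradedIdIdeal_homogeneous hreg s' x hxmem
        (by rw [hsum']; exact hcent (FreeAlgebra.ι F p))
      have := hxI (p.2 * h) (Finset.mem_image_of_mem _ hhs)
      rw [hx] at this
      simpa only [inv_mul_cancel_left] using this
    have hkill : ∀ h ∈ s, h ≠ 1 → fc h ∈ gradedIdIdeal ℛ := fun h hhs hne =>
      kill hreg hmin hR1 hne (hfcmem h) (hcomp h hhs)
    refine ⟨fc 1, hfcmem 1, ?_⟩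
    have hdiff : f₀ - fc 1 ∈ gradedIdIdeal ℛ := by
      by_cases h1 : (1 : H) ∈ s
      · have heq : f₀ - fc 1 = ∑ h ∈ s.erase 1, fc h := by
          rw [hdecomp, ← Finset.add_sum_erase s fc h1, add_sub_cancel_left]
        rw [heq]
        exact sum_mem fun h hh =>
          hkill h (Finset.mem_of_mem_erase hh) (Finset.ne_of_mem_erase hh)
      · have hfc1 : fc 1 = 0 := by
          have hrfl : fc 1 = ∑ i ∈ Finset.filter (fun i => k i = 1) Finset.univ,
              c i • Mon F (w i) := rfl
          have hemp : Finset.univ.filter (fun i => k i = 1) = ∅ := by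
            rw [Finset.filter_eq_empty_iff]
            intro i _ hki
            exact h1 (hs ▸ Finset.mem_image.mpr ⟨i, Finset.mem_univ i, hki⟩)
          rw [hrfl, show Finset.filter (fun i => k i = 1) Finset.univ = ∅ from hemp,
            Finset.sum_empty]
        rw [hfc1, sub_zero, hdecomp]
        exact sum_mem fun h hh => hkill h hh (by rintro rfl; exact h1 hh)
    show (gradedIdIdeal ℛ).ringCon.mk' (fc 1) = (gradedIdIdeal ℛ).ringCon.mk' f₀
    exact ((gradedIdIdeal ℛ).ringCon.eq).mpr ((TwoSidedIdeal.rel_iff _ _ _).mpr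
      (by simpa using (gradedIdIdeal ℛ).neg_mem hdiff))
  · rintro ⟨f, hf, rfl⟩
    rw [Semigroup.mem_center_iff]
    intro g'
    obtain ⟨g, rfl⟩ := hsurj g'
    show (gradedIdIdeal ℛ).ringCon.mk' g * (gradedIdIdeal ℛ).ringCon.mk' f
      = (gradedIdIdeal ℛ).ringCon.mk' f * (gradedIdIdeal ℛ).ringCon.mk' g
    rw [← map_mul, ← map_mul]
    refine ((gradedIdIdeal ℛ).ringCon.eq).mpr ((TwoSidedIdeal.rel_iff _ _ _).mpr ?_)
    induction g using FreeAlgebra.induction with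
    | grade0 r =>
      rw [Algebra.commutes r f, sub_self]
      exact (gradedIdIdeal ℛ).zero_mem
    | grade1 p =>
      have h2 := freeComp_comm_mem_I hreg hf p
      rw [beta_one_left hreg, one_smul] at h2
      have h3 := (gradedIdIdeal ℛ).neg_mem h2
      rw [neg_sub] at h3
      exact h3
    | mul a b ha hb =>
      have h1 := (gradedIdIdeal ℛ).mul_mem_right _ b ha
      have h2 := (gradedIdIdeal ℛ).mul_mem_left a _ hb
      have h3 := (gradedIdIdeal ℛ).add_mem h2 h1
      convert h3 using 1
      noncomm_ring
    | add a b ha hb =>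
      have h3 := (gradedIdIdeal ℛ).add_mem ha hb
      convert h3 using 1
      rw [add_mul, mul_add]
      abel
end
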